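/- For p ∈ R^3 \ {0} with p^0 = |p| (lightlike), the matrix A^1_p = [[√((|p| + p^3)/2), 0],[(p^1 + i p^2)/√(2(|p| + p^3)), √(2/(|p| + p^3))]] has determinant 1 and satisfies Λ(A^1_p) k_0 = (|p|, p), where k_0 = (1,0,0,1), provided |p| + p^3 > 0. -/

import Mathlib

open Matrix

noncomputable def pauliVec (n : Fin 3 → ℝ) : Matrix (Fin 2) (Fin 2) ℂ :=
  n 0 • !![0, 1; 1, 0] + n 1 • !![0, -Complex.I; Complex.I, 0] + n 2 • !![1, 0; 0, -1]

theorem wightman_lightlike_boost (p : Fin 3 → ℝ) (hp : p ≠ 0) :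
    let np : ℝ := Real.sqrt ((p 0) ^ 2 + (p 1) ^ 2 + (p 2) ^ 2)
    ∀ _hpos : 0 < np + p 2,
    let A1 : Matrix (Fin 2) (Fin 2) ℂ :=
      !![(Real.sqrt ((np + p 2) / 2) : ℂ), 0;
         ((p 0 : ℂ) + Complex.I * (p 1 : ℂ)) / (Real.sqrt (2 * (np + p 2)) : ℂ),
         (Real.sqrt (2 / (np + p 2)) : ℂ)]
    A1.det = 1 ∧
    A1 * !![(2 : ℂ), 0; 0, 0] * A1ᴴ =
      np • (1 : Matrix (Fin 2) (Fin 2) ℂ) + pauliVec p := by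
  intro np _hpos A1
  have hx : 0 < np + p 2 := _hpos
  have hnp0 : 0 ≤ (p 0)^2 + (p 1)^2 + (p 2)^2 := by positivity
  have hnp : np^2 = (p 0)^2 + (p 1)^2 + (p 2)^2 := Real.sq_sqrt hnp0
  have hab : Real.sqrt ((np + p 2)/2) * Real.sqrt (2/(np + p 2)) = 1 := by
    rw [← Real.sqrt_mul (by positivity), show (np + p 2)/2 * (2/(np + p 2)) = 1 by
      field_simp]
    exact Real.sqrt_one
  constructor
  · show (!![(Real.sqrt ((np + p 2) / 2) : ℂ), 0;
         ((p 0 : ℂ) + Complex.I * (p 1 : ℂ)) / (Real.sqrt (2 * (np + p 2)) : ℂ),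
         (Real.sqrt (2 / (np + p 2)) : ℂ)]).det = 1
    rw [Matrix.det_fin_two_of]
    push_cast [← Complex.ofReal_mul]
    rw [hab]
    simp
  · show !![(Real.sqrt ((np + p 2) / 2) : ℂ), 0;
         ((p 0 : ℂ) + Complex.I * (p 1 : ℂ)) / (Real.sqrt (2 * (np + p 2)) : ℂ),
         (Real.sqrt (2 / (np + p 2)) : ℂ)] * !![(2 : ℂ), 0; 0, 0] *
      (!![(Real.sqrt ((np + p 2) / 2) : ℂ), 0;
         ((p 0 : ℂ) + Complex.I * (p 1 : ℂ)) / (Real.sqrt (2 * (np + p 2)) : ℂ),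
         (Real.sqrt (2 / (np + p 2)) : ℂ)])ᴴ =
      np • (1 : Matrix (Fin 2) (Fin 2) ℂ) + pauliVec p
    set s : ℝ := Real.sqrt (2 * (np + p 2)) with hs
    have hs2 : s * s = 2 * (np + p 2) := Real.mul_self_sqrt (by positivity)
    have hsne : s ≠ 0 := by positivity
    have h1 : Real.sqrt ((np + p 2) / 2) = s / 2 := by
      rw [hs, show (2:ℝ) * (np + p 2) = ((np+p 2)/2) * 2^2 by ring,
        Real.sqrt_mul (by positivity), Real.sqrt_sq (by norm_num)]
      ring
    have h2 : Real.sqrt (2 / (np + p 2)) = 2 / s := by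
      rw [eq_div_iff hsne, hs, ← Real.sqrt_mul (by positivity),
        show 2 / (np + p 2) * (2 * (np + p 2)) = 2^2 by field_simp,
        Real.sqrt_sq (by norm_num)]
    have hsneC : (s:ℂ) ≠ 0 := by exact_mod_cast hsne
    have hs2C : (s:ℂ) * s = 2 * ((np:ℂ) + (p 2:ℂ)) := by exact_mod_cast hs2
    have hnpC : (np:ℂ)^2 = (p 0:ℂ)^2 + (p 1:ℂ)^2 + (p 2:ℂ)^2 := by exact_mod_cast hnp
    rw [h1, h2]
    ext i j
    fin_cases i <;> fin_cases j <;>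
      simp [pauliVec, Matrix.mul_apply, Fin.sum_univ_two, Matrix.one_apply, map_div₀,
        Complex.conj_ofReal, Matrix.smul_apply, map_ofNat, Complex.I_sq] <;>
      field_simp <;> ring_nf
    · linear_combination hs2C
    · linear_combination (-2*((p 1:ℝ):ℂ)^2) * Complex.I_sq -
        ((np:ℂ)-((p 2:ℝ):ℂ))*hs2C - 2*hnpC
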